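/- Let I, I', I'' : B₀(Σ) → ℝ be monotonic and constant-linear functionals with I'(φ) ≤ I''(φ) for all φ ∈ B₀(Σ). Then the following are equivalent: (i) for all φ, ψ ∈ B₀(Σ), if I'(φ) > I'(ψ) and I''(φ) > I''(ψ), then I(φ) > I(ψ); (ii) there exists α ∈ [0,1] such that I(φ) = α·I'(φ) + (1-α)·I''(φ) for all φ ∈ B₀(Σ). -/

import Mathlib

/-!
Framework: Anscombe–Aumann acts, finitely additive probability measures,
simple acts, hope-and-prepare preferences (Bastianello–Hill style setup).
-/

open Set

section Framework

variable (S : Type*) [MeasurableSpace S]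

/-- The measurable sets (events) of `S`, as a subtype. -/
abbrev MSet := {A : Set S // MeasurableSet A}

/-- Finitely additive probability measures on `(S, Σ)`, viewed as real-valued
set functions on events.  The weak* topology is the topology of pointwise
convergence on events, i.e. the product topology on `MSet S → ℝ`. -/
def ProbCharges : Set (MSet S → ℝ) :=
  {p | (∀ A, 0 ≤ p A) ∧ p ⟨Set.univ, MeasurableSet.univ⟩ = 1 ∧
    ∀ A B : MSet S, Disjoint A.1 B.1 → p ⟨A.1 ∪ B.1, A.2.union B.2⟩ = p A + p B}

end Framework

section Fns

variable {S : Type*} [MeasurableSpace S]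

/-- `φ : S → ℝ` is a measurable simple function (an element of `B₀(Σ)`). -/
def IsSimpleFn (φ : S → ℝ) : Prop :=
  (Set.range φ).Finite ∧ ∀ y : ℝ, MeasurableSet (φ ⁻¹' {y})

/-- The integral `∫ φ dp` of a simple function `φ` against a finitely additive
measure `p` (junk value `0` if `φ` is not simple). -/
noncomputable def fInt (p : MSet S → ℝ) (φ : S → ℝ) : ℝ :=
  @dite _ (IsSimpleFn φ) (Classical.dec _)
    (fun h => ∑ y ∈ h.1.toFinset, y * p ⟨φ ⁻¹' {y}, h.2 y⟩) (fun _ => 0)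

/-- A functional `I : B₀(Σ) → ℝ` is monotonic. -/
def MonotonicFn (I : (S → ℝ) → ℝ) : Prop :=
  ∀ φ ψ, IsSimpleFn φ → IsSimpleFn ψ → (∀ s, φ s ≤ ψ s) → I φ ≤ I ψ

/-- A functional `I : B₀(Σ) → ℝ` is constant-linear: `I(aφ + b) = a I(φ) + b`
for `a ≥ 0`, `b ∈ ℝ`. -/
def ConstLinearFn (I : (S → ℝ) → ℝ) : Prop :=
  ∀ φ, IsSimpleFn φ → ∀ a : ℝ, 0 ≤ a → ∀ b : ℝ,
    I (fun s => a * φ s + b) = a * I φ + b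

end Fns

section Acts

variable {S : Type*} [MeasurableSpace S] {V : Type*} [AddCommGroup V] [Module ℝ V]

/-- `f : S → V` is a simple act with outcomes in `X`: it is `X`-valued,
takes finitely many values and is `Σ`-measurable. -/
def IsAct (X : Set V) (f : S → V) : Prop :=
  (∀ s, f s ∈ X) ∧ (Set.range f).Finite ∧ ∀ v : V, MeasurableSet (f ⁻¹' {v})

/-- Pointwise mixture `αf + (1-α)g` of two acts. -/
def mixAct (α : ℝ) (f g : S → V) : S → V := fun s => α • f s + (1 - α) • g s

/-- The constant act with outcome `x`. -/
def constAct (S : Type*) {V : Type*} (x : V) : S → V := fun _ => x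

/-- `u : V → ℝ` is affine on the convex set `X`. -/
def IsAffineOn (u : V → ℝ) (X : Set V) : Prop :=
  ∀ x ∈ X, ∀ y ∈ X, ∀ α : ℝ, 0 ≤ α → α ≤ 1 →
    u (α • x + (1 - α) • y) = α * u x + (1 - α) * u y

/-- `u` is non-constant on `X`. -/
def NonConstOn (u : V → ℝ) (X : Set V) : Prop := ∃ x ∈ X, ∃ y ∈ X, u x ≠ u y

/-- Expected utility `∫ u(f) dp` of the act `f` under the measure `p`. -/
noncomputable def EU (u : V → ℝ) (f : S → V) (p : MSet S → ℝ) : ℝ :=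
  fInt p (fun s => u (f s))

/-- Worst-case expected utility of `f` over the set of scenarios `C`. -/
noncomputable def minEU (u : V → ℝ) (C : Set (MSet S → ℝ)) (f : S → V) : ℝ :=
  sInf (EU u f '' C)

/-- Best-case expected utility of `f` over the set of scenarios `D`. -/
noncomputable def maxEU (u : V → ℝ) (D : Set (MSet S → ℝ)) (f : S → V) : ℝ :=
  sSup (EU u f '' D)

/-- `f` and `g` are incomparable (`f ⋈ g`). -/
def Incomp (R : (S → V) → (S → V) → Prop) (f g : S → V) : Prop := ¬ R f g ∧ ¬ R g f

end Acts

section Axioms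

variable {S : Type*} [MeasurableSpace S] {V : Type*} [AddCommGroup V] [Module ℝ V]
variable (X : Set V) (R : (S → V) → (S → V) → Prop)

/-- Axiom 1: `≻` is asymmetric and transitive on acts, and its restriction to
constant acts is non-trivial and negatively transitive. -/
def PrefAx1 : Prop :=
  (∀ f g, IsAct X f → IsAct X g → R f g → ¬ R g f) ∧
  (∀ f g h, IsAct X f → IsAct X g → IsAct X h → R f g → R g h → R f h) ∧
  (∃ x ∈ X, ∃ y ∈ X, R (constAct S x) (constAct S y)) ∧
  (∀ x ∈ X, ∀ y ∈ X, ∀ z ∈ X, ¬ R (constAct S x) (constAct S y) →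
    ¬ R (constAct S y) (constAct S z) → ¬ R (constAct S x) (constAct S z))

/-- Axiom 2 (continuity). -/
def PrefAx2 : Prop :=
  ∀ f g h, IsAct X f → IsAct X g → IsAct X h →
    IsOpen {α : Set.Icc (0 : ℝ) 1 | R (mixAct (α : ℝ) f g) h} ∧
    IsOpen {α : Set.Icc (0 : ℝ) 1 | R h (mixAct (α : ℝ) f g)}

/-- Axiom 3 (certainty independence). -/
def PrefAx3 : Prop :=
  ∀ f g, IsAct X f → IsAct X g → ∀ x ∈ X, ∀ α : ℝ, 0 < α → α < 1 →
    (R f g ↔ R (mixAct α f (constAct S x)) (mixAct α g (constAct S x)))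

/-- Axiom 4: for any outcome `x`, the upper and lower contour sets at the
constant act `x` are convex. -/
def PrefAx4 : Prop :=
  ∀ x ∈ X,
    (∀ f g, IsAct X f → IsAct X g → R f (constAct S x) → R g (constAct S x) →
      ∀ α : ℝ, 0 ≤ α → α ≤ 1 → R (mixAct α f g) (constAct S x)) ∧
    (∀ f g, IsAct X f → IsAct X g → R (constAct S x) f → R (constAct S x) g →
      ∀ α : ℝ, 0 ≤ α → α ≤ 1 → R (constAct S x) (mixAct α f g))

/-- Axiom 5 (monotonicity). -/
def PrefAx5 : Prop :=
  ∀ f g, IsAct X f → IsAct X g →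
    (∀ s : S, R (constAct S (f s)) (constAct S (g s))) → R f g

/-- Axiom 6: if every outcome incomparable to `f` is incomparable to `g`,
then `f` and `g` are incomparable. -/
def PrefAx6 : Prop :=
  ∀ f g, IsAct X f → IsAct X g →
    (∀ x ∈ X, Incomp R f (constAct S x) → Incomp R g (constAct S x)) → Incomp R f g

/-- Axiom 7: if `f ⋈ x`, `x ≻ g`, `g ⋈ y` and `f ≻ y`, then `f ≻ g`. -/
def PrefAx7 : Prop :=
  ∀ f g, IsAct X f → IsAct X g → ∀ x ∈ X, ∀ y ∈ X,
    Incomp R f (constAct S x) → R (constAct S x) g →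
    Incomp R g (constAct S y) → R f (constAct S y) → R f g

end Axioms

section Reps

variable {S : Type*} [MeasurableSpace S] {V : Type*} [AddCommGroup V] [Module ℝ V]

/-- `(u, C, D)` is a hope-and-prepare representation of `R`. -/
def IsHPRep (X : Set V) (R : (S → V) → (S → V) → Prop) (u : V → ℝ)
    (C D : Set (MSet S → ℝ)) : Prop :=
  IsAffineOn u X ∧ NonConstOn u X ∧
  C.Nonempty ∧ D.Nonempty ∧ C ⊆ ProbCharges S ∧ D ⊆ ProbCharges S ∧
  IsCompact C ∧ IsCompact D ∧ Convex ℝ C ∧ Convex ℝ D ∧ (C ∩ D).Nonempty ∧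
  ∀ f g, IsAct X f → IsAct X g →
    (R f g ↔ (minEU u C g < minEU u C f ∧ maxEU u D g < maxEU u D f))

/-- `(u, C)` is a Bewley representation of `R`. -/
def IsBewleyRep (X : Set V) (R : (S → V) → (S → V) → Prop) (u : V → ℝ)
    (C : Set (MSet S → ℝ)) : Prop :=
  IsAffineOn u X ∧ NonConstOn u X ∧
  C.Nonempty ∧ C ⊆ ProbCharges S ∧ IsCompact C ∧ Convex ℝ C ∧
  ∀ f g, IsAct X f → IsAct X g → (R f g ↔ ∀ p ∈ C, EU u g p < EU u f p)

/-- `(u, C, D)` is a twofold multi-prior representation of `R`. -/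
def IsTwofoldRep (X : Set V) (R : (S → V) → (S → V) → Prop) (u : V → ℝ)
    (C D : Set (MSet S → ℝ)) : Prop :=
  IsAffineOn u X ∧ NonConstOn u X ∧
  C.Nonempty ∧ D.Nonempty ∧ C ⊆ ProbCharges S ∧ D ⊆ ProbCharges S ∧
  IsCompact C ∧ IsCompact D ∧ Convex ℝ C ∧ Convex ℝ D ∧ (C ∩ D).Nonempty ∧
  ∀ f g, IsAct X f → IsAct X g → (R f g ↔ maxEU u D g < minEU u C f)

end Reps

section Statement

variable {S : Type*} [MeasurableSpace S] [Nonempty S]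
variable {V : Type*} [AddCommGroup V] [Module ℝ V]

lemma isSimpleFn_const' (c : ℝ) : IsSimpleFn (fun _ : S => c) := by
  constructor
  · exact (Set.finite_singleton c).subset (Set.range_subset_iff.2 fun _ => rfl)
  · intro y
    by_cases h : c = y
    · convert MeasurableSet.univ
      ext s; simp [h, Set.mem_preimage]
    · convert MeasurableSet.empty
      ext s; simp [Set.mem_preimage, h]

lemma isSimpleFn_affine' {φ : S → ℝ} (h : IsSimpleFn φ) (a b : ℝ) :
    IsSimpleFn (fun s => a * φ s + b) := by
  constructor
  · apply Set.Finite.subset (h.1.image (fun x => a * x + b))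
    rintro _ ⟨s, rfl⟩; exact ⟨φ s, ⟨s, rfl⟩, rfl⟩
  · intro y
    by_cases ha : a = 0
    · subst ha
      by_cases hb : b = y
      · convert MeasurableSet.univ
        ext s; simp [Set.mem_preimage, hb]
      · convert MeasurableSet.empty
        ext s; simp [Set.mem_preimage, hb]
    · convert h.2 ((y - b) / a) using 1
      ext s
      simp only [Set.mem_preimage, Set.mem_singleton_iff]
      rw [eq_div_iff ha]
      constructor
      · intro h'; nlinarith [mul_comm (φ s) a]
      · intro h'; nlinarith [mul_comm (φ s) a]

/-- Lemma 7: for monotonic constant-linear functionals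
`I, I', I''` on `B₀(Σ)` with `I' ≤ I''`, `I` respects the strict unanimity of
`I'` and `I''` iff `I` is a fixed convex combination `α I' + (1-α) I''`. -/
theorem statement19 (I I' I'' : (S → ℝ) → ℝ)
    (hI : MonotonicFn I) (hI' : MonotonicFn I') (hI'' : MonotonicFn I'')
    (hcl : ConstLinearFn I) (hcl' : ConstLinearFn I') (hcl'' : ConstLinearFn I'')
    (hle : ∀ φ, IsSimpleFn φ → I' φ ≤ I'' φ) :
    (∀ φ ψ, IsSimpleFn φ → IsSimpleFn ψ →
        I' ψ < I' φ → I'' ψ < I'' φ → I ψ < I φ) ↔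
      ∃ α ∈ Set.Icc (0 : ℝ) 1,
        ∀ φ, IsSimpleFn φ → I φ = α * I' φ + (1 - α) * I'' φ := by
  have hconst : ∀ (J : (S → ℝ) → ℝ), ConstLinearFn J → ∀ c : ℝ,
      J (fun _ => c) = c := by
    intro J hJ c
    have h := hJ (fun _ => (0 : ℝ)) (isSimpleFn_const' 0) 0 le_rfl c
    simpa using h
  constructor
  · intro huni
    -- Step: I depends only on the values of I' and I''
    have step : ∀ φ ψ, IsSimpleFn φ → IsSimpleFn ψ → I' φ = I' ψ → I'' φ = I'' ψ →
        I ψ ≤ I φ := by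
      intro φ ψ hφ hψ h1 h2
      by_contra hlt
      push_neg at hlt
      set ε := (I ψ - I φ) / 2 with hεdef
      have hεpos : 0 < ε := by simp only [hεdef]; linarith
      have hφ' : IsSimpleFn (fun s => 1 * φ s + ε) := isSimpleFn_affine' hφ 1 ε
      have e1 : I' (fun s => 1 * φ s + ε) = I' φ + ε := by
        rw [hcl' φ hφ 1 zero_le_one ε]; ring
      have e2 : I'' (fun s => 1 * φ s + ε) = I'' φ + ε := by
        rw [hcl'' φ hφ 1 zero_le_one ε]; ring
      have e3 : I (fun s => 1 * φ s + ε) = I φ + ε := by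
        rw [hcl φ hφ 1 zero_le_one ε]; ring
      have := huni (fun s => 1 * φ s + ε) ψ hφ' hψ
        (by rw [e1, h1]; linarith) (by rw [e2, h2]; linarith)
      rw [e3] at this
      simp only [hεdef] at this
      linarith
    have key : ∀ φ ψ, IsSimpleFn φ → IsSimpleFn ψ → I' φ = I' ψ → I'' φ = I'' ψ →
        I φ = I ψ := fun φ ψ hφ hψ h1 h2 =>
      le_antisymm (step ψ φ hψ hφ h1.symm h2.symm) (step φ ψ hφ hψ h1 h2)
    by_cases hdiff : ∃ χ, IsSimpleFn χ ∧ I' χ < I'' χ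
    · obtain ⟨χ, hχ, hχlt⟩ := hdiff
      set d := I'' χ - I' χ with hddef
      have hd : 0 < d := by simp only [hddef]; linarith
      set ψ₀ : S → ℝ := fun s => (1 / d) * χ s + (-(I' χ) / d) with hψ₀def
      have hψ₀ : IsSimpleFn ψ₀ := isSimpleFn_affine' hχ _ _
      have e' : I' ψ₀ = 0 := by
        rw [hψ₀def, hcl' χ hχ (1 / d) (by positivity) _]
        field_simp
        ring
      have e'' : I'' ψ₀ = 1 := by
        rw [hψ₀def, hcl'' χ hχ (1 / d) (by positivity) _]
        field_simp
        simp only [hddef]; ring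
      set β := I ψ₀ with hβdef
      have hβ0 : 0 ≤ β := by
        by_contra hβ
        push_neg at hβ
        have hc := huni ψ₀ (fun _ => β / 2) hψ₀ (isSimpleFn_const' _)
          (by rw [e', hconst I' hcl']; linarith)
          (by rw [e'', hconst I'' hcl'']; linarith)
        rw [hconst I hcl] at hc
        linarith
      have hβ1 : β ≤ 1 := by
        by_contra hβ
        push_neg at hβ
        have hc := huni (fun _ => (β + 1) / 2) ψ₀ (isSimpleFn_const' _) hψ₀
          (by rw [e', hconst I' hcl']; linarith)
          (by rw [e'', hconst I'' hcl'']; linarith)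
        rw [hconst I hcl] at hc
        linarith
      refine ⟨1 - β, ⟨by linarith, by linarith⟩, ?_⟩
      intro φ hφ
      have hxy : I' φ ≤ I'' φ := hle φ hφ
      set x := I' φ
      set y := I'' φ
      set ψ : S → ℝ := fun s => (y - x) * ψ₀ s + x with hψdef
      have hψs : IsSimpleFn ψ := isSimpleFn_affine' hψ₀ _ _
      have f' : I' ψ = x := by
        rw [hψdef, hcl' ψ₀ hψ₀ (y - x) (by linarith) x, e']; ring
      have f'' : I'' ψ = y := by
        rw [hψdef, hcl'' ψ₀ hψ₀ (y - x) (by linarith) x, e'']; ring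
      have f : I ψ = (y - x) * β + x := by
        rw [hψdef, hcl ψ₀ hψ₀ (y - x) (by linarith) x]
      have := key φ ψ hφ hψs f'.symm f''.symm
      rw [this, f]; ring
    · push_neg at hdiff
      refine ⟨1, ⟨zero_le_one, le_rfl⟩, ?_⟩
      intro φ hφ
      have heq : I' φ = I'' φ := le_antisymm (hle φ hφ) (hdiff φ hφ)
      have h1 : I' φ = I' (fun _ => I' φ) := by rw [hconst I' hcl']
      have h2 : I'' φ = I'' (fun _ => I' φ) := by rw [hconst I'' hcl'', heq]
      have := key φ (fun _ => I' φ) hφ (isSimpleFn_const' _) h1 h2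
      rw [this, hconst I hcl]; ring
  · rintro ⟨α, ⟨h0, h1⟩, hrep⟩ φ ψ hφ hψ hlt' hlt''
    rw [hrep φ hφ, hrep ψ hψ]
    rcases lt_or_eq_of_le h0 with hpos | hzero
    · have a1 := mul_lt_mul_of_pos_left hlt' hpos
      have a2 := mul_le_mul_of_nonneg_left hlt''.le (by linarith : (0:ℝ) ≤ 1 - α)
      linarith
    · have a2 := mul_lt_mul_of_pos_left hlt'' (by linarith : (0:ℝ) < 1 - α)
      rw [← hzero]
      simp only [zero_mul, sub_zero, zero_add]
      rw [← hzero] at a2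
      simpa using a2

end Statement
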